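/- arXiv:1312.5858 — 2 statements merged into one kernel-verified Lean document; each statement's English description precedes it below -/
import Mathlib

section
/- Let ξ : E → ℝⁿ be a linear map from a finite-dimensional real inner product space E of dimension m, and let k ≥ min(m, n). Then the Hilbert–Schmidt (Frobenius) norm of ξ equals the supremum of the Hilbert–Schmidt norms of ρ ∘ ξ over all linear maps ρ : ℝⁿ → ℝᵏ with operator norm at most 1. -/
open scoped BigOperators
set_option maxHeartbeats 1000000

/-- The Hilbert–Schmidt (Frobenius) norm of a linear map from a finite-dimensional real
inner product space, computed with the standard orthonormal basis. -/
noncomputable def frobNorm {E F : Type*} [NormedAddCommGroup E] [InnerProductSpace ℝ E]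
    [FiniteDimensional ℝ E] [NormedAddCommGroup F] [NormedSpace ℝ F]
    (ξ : E →ₗ[ℝ] F) : ℝ :=
  Real.sqrt (∑ i, ‖ξ (stdOrthonormalBasis ℝ E i)‖ ^ 2)

theorem stmt0 {E : Type*} [NormedAddCommGroup E] [InnerProductSpace ℝ E]
    [FiniteDimensional ℝ E] {m n k : ℕ} (hm : Module.finrank ℝ E = m)
    (hk : min m n ≤ k)
    (ξ : E →ₗ[ℝ] EuclideanSpace ℝ (Fin n)) :
    frobNorm ξ =
      sSup {x : ℝ | ∃ ρ : EuclideanSpace ℝ (Fin n) →L[ℝ] EuclideanSpace ℝ (Fin k),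
        ‖ρ‖ ≤ 1 ∧
        x = frobNorm ((ρ : EuclideanSpace ℝ (Fin n) →ₗ[ℝ] EuclideanSpace ℝ (Fin k)).comp ξ)} := by
  set S := {x : ℝ | ∃ ρ : EuclideanSpace ℝ (Fin n) →L[ℝ] EuclideanSpace ℝ (Fin k),
        ‖ρ‖ ≤ 1 ∧
        x = frobNorm ((ρ : EuclideanSpace ℝ (Fin n) →ₗ[ℝ] EuclideanSpace ℝ (Fin k)).comp ξ)}
  -- construct the optimal ρ
  set V := LinearMap.range ξ with hV
  have hdV : Module.finrank ℝ V ≤ k := by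
    refine le_trans (le_trans (le_min ?_ ?_) hk) le_rfl
    · exact hm ▸ LinearMap.finrank_range_le ξ
    · simpa [finrank_euclideanSpace_fin] using Submodule.finrank_le V
  set d := Module.finrank ℝ V with hd
  let v : Module.Basis (Fin d) ℝ V := (stdOrthonormalBasis ℝ V).toBasis
  let f : V →ₗ[ℝ] EuclideanSpace ℝ (Fin k) :=
    v.constr ℝ (fun i => EuclideanSpace.single (Fin.castLE hdV i) (1 : ℝ))
  have hvon : Orthonormal ℝ v := by
    have := (stdOrthonormalBasis ℝ V).orthonormal
    rwa [← (stdOrthonormalBasis ℝ V).coe_toBasis] at this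
  have hfon : Orthonormal ℝ (f ∘ v) := by
    have heq : (f ∘ v) = (fun i : Fin k => EuclideanSpace.single i (1 : ℝ)) ∘ Fin.castLE hdV := by
      funext i
      show f (v i) = _
      simp only [f, Module.Basis.constr_basis]
      rfl
    rw [heq]
    exact EuclideanSpace.orthonormal_single.comp _ (Fin.castLE_injective hdV)
  set φ : V →ₗᵢ[ℝ] EuclideanSpace ℝ (Fin k) := f.isometryOfOrthonormal hvon hfon with hφ
  set ρ : EuclideanSpace ℝ (Fin n) →L[ℝ] EuclideanSpace ℝ (Fin k) :=
    φ.toContinuousLinearMap.comp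
      (Submodule.orthogonalProjection V : EuclideanSpace ℝ (Fin n) →L[ℝ] V) with hρ
  have hρnorm : ‖ρ‖ ≤ 1 := by
    refine ContinuousLinearMap.opNorm_le_bound _ zero_le_one (fun x => ?_)
    have h1 : ‖ρ x‖ = ‖(Submodule.orthogonalProjection V x : V)‖ := by
      simp [hρ, φ.norm_map]
    rw [h1, one_mul]
    calc ‖(Submodule.orthogonalProjection V x : V)‖
        ≤ ‖(Submodule.orthogonalProjection V : EuclideanSpace ℝ (Fin n) →L[ℝ] V)‖ * ‖x‖ :=
          (Submodule.orthogonalProjection V).le_opNorm x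
      _ ≤ 1 * ‖x‖ := by
          exact mul_le_mul_of_nonneg_right (Submodule.orthogonalProjection_norm_le V) (norm_nonneg x)
      _ = ‖x‖ := one_mul _
  have hρξ : ∀ y : E, ‖ρ (ξ y)‖ = ‖ξ y‖ := by
    intro y
    have hmem : ξ y ∈ V := LinearMap.mem_range_self ξ y
    have hproj : ((Submodule.orthogonalProjection V) (ξ y) : EuclideanSpace ℝ (Fin n)) = ξ y :=
      Submodule.starProjection_eq_self_iff.mpr hmem
    have : ‖ρ (ξ y)‖ = ‖(Submodule.orthogonalProjection V (ξ y) : V)‖ := by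
      simp [hρ, φ.norm_map]
    rw [this, ← Submodule.norm_coe, hproj]
  have hmemS : frobNorm ξ ∈ S := by
    refine ⟨ρ, hρnorm, ?_⟩
    unfold frobNorm
    congr 1
    refine Finset.sum_congr rfl (fun i _ => ?_)
    simp [hρξ]
  have hub : ∀ x ∈ S, x ≤ frobNorm ξ := by
    rintro x ⟨σ, hσ, rfl⟩
    unfold frobNorm
    apply Real.sqrt_le_sqrt
    refine Finset.sum_le_sum (fun i _ => ?_)
    have h1 : ‖σ (ξ (stdOrthonormalBasis ℝ E i))‖ ≤ ‖ξ (stdOrthonormalBasis ℝ E i)‖ := by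
      calc ‖σ (ξ (stdOrthonormalBasis ℝ E i))‖
          ≤ ‖σ‖ * ‖ξ (stdOrthonormalBasis ℝ E i)‖ := σ.le_opNorm _
        _ ≤ 1 * ‖ξ (stdOrthonormalBasis ℝ E i)‖ :=
            mul_le_mul_of_nonneg_right hσ (norm_nonneg _)
        _ = _ := one_mul _
    calc ‖(σ : EuclideanSpace ℝ (Fin n) →ₗ[ℝ] EuclideanSpace ℝ (Fin k)).comp ξ
          (stdOrthonormalBasis ℝ E i)‖ ^ 2
        = ‖σ (ξ (stdOrthonormalBasis ℝ E i))‖ ^ 2 := rfl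
      _ ≤ ‖ξ (stdOrthonormalBasis ℝ E i)‖ ^ 2 :=
          pow_le_pow_left₀ (norm_nonneg _) h1 2
  exact (IsGreatest.csSup_eq ⟨hmemS, hub⟩).symm
end

section
/- Let α > 0 and let u : ℝᵐ → ℝ be defined by u(x) = ‖x‖^{−α} for x ≠ 0 (and u(0) = 0). For every C¹ function f : ℝ → ℝ with compact support, the composition f ∘ u is weakly differentiable on ℝᵐ (i.e., f ∘ u lies in W^{1,1}_loc(ℝᵐ)). -/
open MeasureTheory

theorem stmt4 {m : ℕ} (hm : 1 ≤ m) (α : ℝ) (hα : 0 < α)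
    (u : EuclideanSpace ℝ (Fin m) → ℝ)
    (hu : ∀ x : EuclideanSpace ℝ (Fin m), x ≠ 0 → u x = ‖x‖ ^ (-α)) (hu0 : u 0 = 0)
    (f : ℝ → ℝ) (hf : ContDiff ℝ 1 f) (hfc : HasCompactSupport f) :
    LocallyIntegrable (fun x => f (u x)) volume ∧
    ∃ g : EuclideanSpace ℝ (Fin m) → EuclideanSpace ℝ (Fin m),
      LocallyIntegrable g volume ∧
      ∀ φ : EuclideanSpace ℝ (Fin m) → ℝ, ContDiff ℝ 1 φ → HasCompactSupport φ →
        ∫ x, f (u x) • gradient φ x = - ∫ x, φ x • g x := by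
  classical
  haveI : Nontrivial (EuclideanSpace ℝ (Fin m)) := by
    refine ⟨EuclideanSpace.single ⟨0, hm⟩ 1, 0, fun h => ?_⟩
    have h2 := congrArg (fun v : EuclideanSpace ℝ (Fin m) => v ⟨0, hm⟩) h
    simp [EuclideanSpace.single_apply] at h2
  -- a bound on the support of f
  obtain ⟨R, hR0, hR⟩ : ∃ R : ℝ, 0 < R ∧ ∀ t : ℝ, R < t → f t = 0 := by
    obtain ⟨R, hRs⟩ := hfc.isBounded.subset_closedBall 0
    refine ⟨max R 1, lt_of_lt_of_le one_pos (le_max_right _ _), fun t ht => ?_⟩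
    apply image_eq_zero_of_notMem_tsupport
    intro hmem
    have h1 := hRs hmem
    rw [Metric.mem_closedBall, Real.dist_eq, sub_zero] at h1
    have h2 : t ≤ R := (le_abs_self t).trans h1
    have h3 : t ≤ max R 1 := h2.trans (le_max_left _ _)
    linarith
  set r : ℝ := R ^ (-α⁻¹) with hr
  have hr0 : 0 < r := Real.rpow_pos_of_pos hR0 _
  have hkey : ∀ x : EuclideanSpace ℝ (Fin m), x ≠ 0 → ‖x‖ < r → R < ‖x‖ ^ (-α) := by
    intro x hx hxr
    have hx0 : (0:ℝ) < ‖x‖ := norm_pos_iff.2 hx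
    have h1 : r ^ (-α) < ‖x‖ ^ (-α) :=
      Real.rpow_lt_rpow_of_neg hx0 hxr (neg_neg_iff_pos.2 hα)
    have h2 : r ^ (-α) = R := by
      rw [hr, ← Real.rpow_mul hR0.le, neg_mul_neg, inv_mul_cancel₀ hα.ne', Real.rpow_one]
    rwa [h2] at h1
  -- the smooth representative
  set G : EuclideanSpace ℝ (Fin m) → ℝ :=
    fun x => if x = 0 then 0 else f (‖x‖ ^ (-α)) with hGdef
  have hGball : ∀ x ∈ Metric.ball (0:EuclideanSpace ℝ (Fin m)) r, G x = 0 := by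
    intro x hx
    rw [Metric.mem_ball, dist_zero_right] at hx
    by_cases hx0 : x = 0
    · simp [hGdef, hx0]
    · simp only [hGdef, if_neg hx0]
      exact hR _ (hkey x hx0 hx)
  have hG : ContDiff ℝ 1 G := by
    rw [contDiff_iff_contDiffAt]
    intro x
    by_cases hx : x = 0
    · subst hx
      refine (contDiffAt_const (c := (0:ℝ))).congr_of_eventuallyEq ?_
      filter_upwards [Metric.ball_mem_nhds (0:EuclideanSpace ℝ (Fin m)) hr0] with y hy using
        hGball y hy
    · have h1 : ContDiffAt ℝ 1 (fun y : EuclideanSpace ℝ (Fin m) => f (‖y‖ ^ (-α))) x := by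
        refine hf.contDiffAt.comp x ?_
        exact (Real.contDiffAt_rpow_const_of_ne (norm_ne_zero_iff.2 hx)).comp x
          (contDiffAt_norm (𝕜 := ℝ) hx)
      refine h1.congr_of_eventuallyEq ?_
      filter_upwards [isOpen_compl_singleton.mem_nhds hx] with y hy
      simp only [hGdef, if_neg (by simpa using hy : y ≠ (0:EuclideanSpace ℝ (Fin m)))]
  have hGdiff : Differentiable ℝ G := hG.differentiable one_ne_zero
  have hGcont : Continuous G := hG.continuous
  have hGfderiv : Continuous (fderiv ℝ G) := hG.continuous_fderiv one_ne_zero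
  -- a.e. equality of f ∘ u with G
  have hne : ∀ᵐ x ∂(volume : Measure (EuclideanSpace ℝ (Fin m))), x ≠ 0 := by
    rw [MeasureTheory.ae_iff]
    simpa using measure_singleton (0:EuclideanSpace ℝ (Fin m))
  have hae : (fun x => f (u x)) =ᵐ[(volume : Measure (EuclideanSpace ℝ (Fin m)))] G := by
    filter_upwards [hne] with x hx
    simp only [hGdef, if_neg hx, hu x hx]
  constructor
  · intro x
    obtain ⟨s, hs, hint⟩ := hGcont.locallyIntegrable (μ := volume) x
    exact ⟨s, hs, hint.congr (ae_restrict_of_ae hae.symm)⟩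
  · refine ⟨gradient G, ?_, ?_⟩
    · have : Continuous (gradient G) :=
        (InnerProductSpace.toDual ℝ (EuclideanSpace ℝ (Fin m))).symm.continuous.comp hGfderiv
      exact this.locallyIntegrable
    · intro φ hφ hφc
      have hφdiff : Differentiable ℝ φ := hφ.differentiable one_ne_zero
      have hφcont : Continuous φ := hφ.continuous
      have hφfderiv : Continuous (fderiv ℝ φ) := hφ.continuous_fderiv one_ne_zero
      have hgradφ_cont : Continuous (gradient φ) :=
        (InnerProductSpace.toDual ℝ (EuclideanSpace ℝ (Fin m))).symm.continuous.comp hφfderiv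
      have hgradφ_cs : HasCompactSupport (gradient φ) :=
        (hφc.fderiv ℝ).comp_left
          (g := (InnerProductSpace.toDual ℝ (EuclideanSpace ℝ (Fin m))).symm) (by simp)
      -- integrability facts
      have hI1 : Integrable (fun x => G x • gradient φ x) volume := by
        have hcs : HasCompactSupport (fun x => G x • gradient φ x) :=
          hgradφ_cs.smul_left (f := G)
        exact (hGcont.smul hgradφ_cont).integrable_of_hasCompactSupport hcs
      have hI2 : Integrable (fun x => φ x • gradient G x) volume := by
        have hcs : HasCompactSupport (fun x => φ x • gradient G x) := by
          have := HasCompactSupport.smul_right (f' := gradient G) hφc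
          exact this
        exact (hφcont.smul
          ((InnerProductSpace.toDual ℝ (EuclideanSpace ℝ (Fin m))).symm.continuous.comp
            hGfderiv)).integrable_of_hasCompactSupport hcs
      have step1 : ∫ x, f (u x) • gradient φ x = ∫ x, G x • gradient φ x := by
        apply integral_congr_ae
        filter_upwards [hae] with x hx
        rw [hx]
      rw [step1]
      apply ext_inner_left ℝ
      intro v
      have hinnerφ : ∀ x, (inner ℝ v (gradient φ x) : ℝ) = fderiv ℝ φ x v := by
        intro x
        rw [real_inner_comm]
        exact InnerProductSpace.toDual_symm_apply
      have hinnerG : ∀ x, (inner ℝ v (gradient G x) : ℝ) = fderiv ℝ G x v := by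
        intro x
        rw [real_inner_comm]
        exact InnerProductSpace.toDual_symm_apply
      rw [← integral_inner hI1 v, inner_neg_right, ← integral_inner hI2 v]
      have lhs_eq : ∫ x, (inner ℝ v (G x • gradient φ x) : ℝ)
          = ∫ x, G x * fderiv ℝ φ x v := by
        congr 1 with x
        rw [real_inner_smul_right, hinnerφ]
      have rhs_eq : ∫ x, (inner ℝ v (φ x • gradient G x) : ℝ)
          = ∫ x, φ x * fderiv ℝ G x v := by
        congr 1 with x
        rw [real_inner_smul_right, hinnerG]
      rw [lhs_eq, rhs_eq]
      have hfderivG_cont : Continuous (fun x => fderiv ℝ G x v) :=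
        (ContinuousLinearMap.apply ℝ ℝ v).continuous.comp hGfderiv
      have hfderivφ_cont : Continuous (fun x => fderiv ℝ φ x v) :=
        (ContinuousLinearMap.apply ℝ ℝ v).continuous.comp hφfderiv
      have hfderivφ_cs : HasCompactSupport (fun x => fderiv ℝ φ x v) :=
        hφc.fderiv_apply ℝ v
      have h1 : Integrable (fun x => fderiv ℝ G x v * φ x) volume := by
        have hcs : HasCompactSupport (fun x => fderiv ℝ G x v * φ x) := hφc.mul_left
        exact (hfderivG_cont.mul hφcont).integrable_of_hasCompactSupport hcs
      have h2 : Integrable (fun x => G x * fderiv ℝ φ x v) volume := by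
        have hcs : HasCompactSupport (fun x => G x * fderiv ℝ φ x v) :=
          hfderivφ_cs.mul_left
        exact (hGcont.mul hfderivφ_cont).integrable_of_hasCompactSupport hcs
      have h3 : Integrable (fun x => G x * φ x) volume := by
        have hcs : HasCompactSupport (fun x => G x * φ x) := hφc.mul_left
        exact (hGcont.mul hφcont).integrable_of_hasCompactSupport hcs
      have key := integral_mul_fderiv_eq_neg_fderiv_mul_of_integrable h1 h2 h3 (fun x _ => hGdiff x) (fun x _ => hφdiff x)
      rw [key]
      congr 1
      congr 1 with x
      ring
end
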